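/- Let S be a semigroup, σ : S → S an involutive automorphism, and z₀ ∈ Z(S) a fixed element. The pairs f, g : S → ℂ with g ≠ 0 satisfying f(x y z₀) + f(σ(y) x z₀) = 2 f(x) g(y) for all x, y ∈ S are exactly the following: (1) f = 0 and g ≠ 0 arbitrary; (2) f = λ₂ m and g = (m(z₀)/2)(m + m*), where m : S → ℂ is multiplicative, λ₂ ∈ ℂ \ {0}, and m(z₀) ≠ 0; (3) f = α₁ χ + β₁ χ* and g = (χ(z₀)/2)(χ + χ*), where χ : S → ℂ is multiplicative, α₁, β₁ ∈ ℂ with (α₁, β₁) ≠ (0, 0), χ ≠ χ*, χ(z₀) = χ*(z₀), and χ(z₀) ≠ 0; (4) f = λ(γ₁ χ + φ) and g = χ(z₀) χ, where χ : S → ℂ is a nonzero multiplicative function, φ is a nonzero solution of the special sine addition law φ(xy) = φ(x)χ(y) + φ(y)χ(x), λ ∈ ℂ \ {0}, γ₁ ∈ ℂ, χ* = χ, φ* = −φ, χ(z₀) ≠ 0, and φ(z₀) = 0. -/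

import Mathlib

private lemma exists_sq' (z : ℂ) : ∃ s : ℂ, s*s = z := by
  by_cases hz : z = 0
  · exact ⟨0, by simp [hz]⟩
  · refine ⟨Complex.exp (Complex.log z / 2), ?_⟩
    rw [← Complex.exp_add, show Complex.log z / 2 + Complex.log z / 2 = Complex.log z by ring]
    exact Complex.exp_log hz

private lemma mult_sum_contra {S : Type*} [Semigroup S] (σ : S → S)
    (hσmul : ∀ x y : S, σ (x * y) = σ x * σ y) (hσinv : ∀ x : S, σ (σ x) = x)
    (m χ : S → ℂ) (hm : ∀ x y, m (x*y) = m x * m y)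
    (hχ : ∀ x y, χ (x*y) = χ x * χ y) (hχne : ∃ x, χ x ≠ 0)
    (hsum : ∀ x, m x = χ x + χ (σ x)) : False := by
  have key : ∀ x y : S, χ x * χ (σ y) + χ (σ x) * χ y = 0 := by
    intro x y
    have h1 := hm x y
    rw [hsum (x*y), hsum x, hsum y, hχ x y, hσmul, hχ (σ x) (σ y)] at h1
    linear_combination -h1
  obtain ⟨x₁, hx₁⟩ := hχne
  have h3 : χ (σ x₁) = 0 := by
    have h2' : χ x₁ * χ (σ x₁) = 0 := by linear_combination (key x₁ x₁)/2
    rcases mul_eq_zero.mp h2' with h | h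
    · exact absurd h hx₁
    · exact h
  have h4 : ∀ y, χ (σ y) = 0 := by
    intro y
    have h5 : χ x₁ * χ (σ y) = 0 := by linear_combination key x₁ y - χ y * h3
    rcases mul_eq_zero.mp h5 with h | h
    · exact absurd h hx₁
    · exact h
  exact hx₁ (by rw [← hσinv x₁]; exact h4 (σ x₁))

private lemma mult_indep {S : Type*} [Semigroup S] (χ₁ χ₂ : S → ℂ)
    (h₁ : ∀ x y, χ₁ (x*y) = χ₁ x * χ₁ y) (h₂ : ∀ x y, χ₂ (x*y) = χ₂ x * χ₂ y)
    (hne : ∃ y, χ₁ y ≠ χ₂ y) (hn1 : ∃ x, χ₁ x ≠ 0) (hn2 : ∃ x, χ₂ x ≠ 0)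
    (A B : ℂ) (hAB : ∀ x, A*χ₁ x + B*χ₂ x = 0) : A = 0 ∧ B = 0 := by
  obtain ⟨y₁, hy₁⟩ := hne
  obtain ⟨x₁, hx₁⟩ := hn1
  obtain ⟨x₂, hx₂⟩ := hn2
  have key : ∀ x y, B*χ₂ x*(χ₂ y - χ₁ y) = 0 := by
    intro x y
    have e1 := hAB (x*y)
    rw [h₁ x y, h₂ x y] at e1
    have e2 := hAB x
    linear_combination e1 - χ₁ y * e2
  have hd : χ₂ y₁ - χ₁ y₁ ≠ 0 := sub_ne_zero.mpr (Ne.symm hy₁)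
  have hB : B = 0 := by
    rcases mul_eq_zero.mp (key x₂ y₁) with h | h
    · rcases mul_eq_zero.mp h with h' | h'
      · exact h'
      · exact absurd h' hx₂
    · exact absurd h hd
  refine ⟨?_, hB⟩
  have h5 : A * χ₁ x₁ = 0 := by linear_combination hAB x₁ - χ₂ x₁ * hB
  rcases mul_eq_zero.mp h5 with h | h
  · exact h
  · exact absurd h hx₁

private lemma exists_sq (z : ℂ) : ∃ s : ℂ, s*s = z := by
  by_cases hz : z = 0
  · exact ⟨0, by simp [hz]⟩
  · refine ⟨Complex.exp (Complex.log z / 2), ?_⟩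
    rw [← Complex.exp_add, show Complex.log z / 2 + Complex.log z / 2 = Complex.log z by ring]
    exact Complex.exp_log hz

private lemma wilson_variant {S : Type*} [Semigroup S] (σ : S → S)
    (hσmul : ∀ x y : S, σ (x * y) = σ x * σ y) (hσinv : ∀ x : S, σ (σ x) = x)
    (w G : S → ℂ)
    (hw : ∀ x y : S, w (x * y) + w (σ y * x) = 2 * w x * G y)
    (hwne : w ≠ 0) (hGne : G ≠ 0) :
    (∃ (m : S → ℂ) (t : ℂ), (∀ x y, m (x*y) = m x * m y) ∧ t ≠ 0 ∧
      (∀ x, w x = t * m x) ∧ (∀ x, G x = (m x + m (σ x))/2)) ∨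
    (∃ (χ : S → ℂ) (α β : ℂ), (∀ x y, χ (x*y) = χ x * χ y) ∧
      χ ≠ (fun x => χ (σ x)) ∧
      (∀ x, w x = α * χ x + β * χ (σ x)) ∧ (∀ x, G x = (χ x + χ (σ x))/2)) ∨
    (∃ (χ φ : S → ℂ) (γ : ℂ), (∀ x y, χ (x*y) = χ x * χ y) ∧ χ ≠ 0 ∧ φ ≠ 0 ∧
      (∀ x y, φ (x*y) = φ x * χ y + φ y * χ x) ∧
      (∀ x, χ (σ x) = χ x) ∧ (∀ x, φ (σ x) = - φ x) ∧
      (∀ x, w x = γ * χ x + φ x) ∧ (∀ x, G x = χ x)) := by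
  obtain ⟨x₀, hx₀⟩ : ∃ x, G x ≠ 0 := by
    by_contra h; push_neg at h; exact hGne (funext fun x => h x)
  have W2 : ∀ x y u : S, w (x*(y*u)) =
      w (x*y)*G u + w (x*u)*G y - 2*w x*G u*G y + w x*G (y*u) := by
    intro x y u
    have h1 := hw x (y*u)
    have h2 := hw (x*y) u
    have h3 := hw (σ u*x) y
    have h4 := hw x u
    simp only [hσmul, mul_assoc] at h1 h2 h3 h4
    linear_combination (h1 + h2 - h3)/2 - G y * h4
  have KEYW : ∀ x y u v : S, (w (x*y) - w x*G y)*(G (u*v) - G u*G v)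
      = (w (x*v) - w x*G v)*(G (y*u) - G y*G u) := by
    intro x y u v
    have e1 := W2 x y (u*v)
    have e2 := W2 x (y*u) v
    have e3 := W2 x u v
    have e4 := W2 x y u
    simp only [mul_assoc] at e1 e2
    linear_combination -e1 + e2 - G y*e3 + G v*e4
  by_cases hΨ : ∀ u v : S, G (u*v) = G u * G v
  · -- Case W-I : G is multiplicative
    have Crel : ∀ x y u : S, w (x*(y*u)) - w (x*y)*G u = G y*(w (x*u) - w x*G u) := by
      intro x y u; have h := W2 x y u; rw [hΨ y u] at h; linear_combination h
    have E1 : ∀ x y u : S, G y*(w (x*u) - w x*G u) = G x*(w (σ y*u) - w (σ y)*G u) := by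
      intro x y u
      have h1 := hw (x*u) y
      have h2 := Crel x u y
      have h3 := Crel (σ y) x u
      have h4 := hw x y
      simp only [hσmul, mul_assoc] at h1 h2 h3 h4 ⊢
      linear_combination -h1 + h2 + h3 + G u*h4
    have hρc : ∀ y u : S, (w (y*u) - w y*G u)*G x₀ = G (σ y)*(w (x₀*u) - w x₀*G u) := by
      intro y u
      have h1 := E1 x₀ (σ y) u
      rw [hσinv] at h1
      linear_combination -h1
    by_cases hφ0 : ∀ u : S, w (x₀*u) - w x₀*G u = 0
    · -- subcase : w is proportional to a multiplicative function
      have hρ0 : ∀ y u : S, w (y*u) = w y*G u := by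
        intro y u
        have h := hρc y u
        rw [hφ0 u, mul_zero] at h
        rcases mul_eq_zero.mp h with h' | h'
        · linear_combination h'
        · exact absurd h' hx₀
      have hA : ∀ x y : S, w (σ y*x) = w x*G y := by
        intro x y; linear_combination hw x y - hρ0 x y
      have hyx : ∀ x y : S, w y*G x = w x*G (σ y) := by
        intro x y
        have h1 := hA x (σ y); rw [hσinv] at h1
        linear_combination h1 - hρ0 y x
      have hwx₀ : w x₀ ≠ 0 := by
        intro h0
        apply hwne; funext y
        have h1 := hyx x₀ y
        rw [h0, zero_mul] at h1
        exact (mul_eq_zero.mp h1).resolve_right hx₀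
      have hGσG : ∀ y : S, G (σ y) = G y := by
        intro y
        have h1 := hρ0 (σ x₀) y
        have h2 := hyx x₀ (σ x₀ * y)
        rw [hσmul, hσinv, hΨ x₀ (σ y)] at h2
        have h3 := hyx x₀ (σ x₀)
        rw [hσinv] at h3
        have e : (w x₀*G x₀)*(G (σ y) - G y) = 0 := by
          linear_combination G x₀*h1 - h2 + G y*h3
        have h4 := (mul_eq_zero.mp e).resolve_left (mul_ne_zero hwx₀ hx₀)
        linear_combination h4
      refine Or.inl ⟨G, w x₀/G x₀, hΨ, div_ne_zero hwx₀ hx₀, ?_, ?_⟩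
      · intro x
        have h1 := hyx x₀ x
        rw [hGσG x] at h1
        field_simp
        linear_combination h1
      · intro x; rw [hGσG x]; ring
    · -- subcase : sine addition
      push_neg at hφ0
      obtain ⟨u₁, hu₁⟩ := hφ0
      have hχσ : ∀ y : S, G (σ y) = G y := by
        intro y
        have h1 := Crel (σ x₀) y u₁
        have h2 := hρc (σ x₀ * y) u₁
        rw [hσmul, hσinv, hΨ x₀ (σ y)] at h2
        simp only [mul_assoc] at h2
        have h3 := hρc (σ x₀) u₁
        rw [hσinv] at h3
        have e : (G x₀*(w (x₀*u₁) - w x₀*G u₁))*(G (σ y) - G y) = 0 := by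
          linear_combination G x₀*h1 - h2 + G y*h3
        have h4 := (mul_eq_zero.mp e).resolve_left (mul_ne_zero hx₀ hu₁)
        linear_combination h4
      have hρ₀c : ∀ y u : S, (w (y*u) - w y*G u)*G x₀ = G y*(w (x₀*u) - w x₀*G u) := by
        intro y u; have := hρc y u; rwa [hχσ y] at this
      obtain ⟨φf, hφfact⟩ : ∃ φf : S → ℂ, ∀ u, w (x₀*u) - w x₀*G u = G x₀ * φf u :=
        ⟨fun u => (w (x₀*u) - w x₀*G u)/G x₀, fun u => by field_simp⟩
      have hφu₁ : φf u₁ ≠ 0 := by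
        intro h
        rw [hφfact u₁, h, mul_zero] at hu₁
        exact hu₁ rfl
      have hsine : ∀ y u : S, φf (y*u) = φf y*G u + φf u*G y := by
        intro y u
        have h1 := W2 x₀ y u
        have e : G x₀*(φf (y*u) - (φf y*G u + φf u*G y)) = 0 := by
          linear_combination h1 - hφfact (y*u) + G u*hφfact y
            + G y*hφfact u
        have h4 := (mul_eq_zero.mp e).resolve_left hx₀
        linear_combination h4
      have hdagger : ∀ x y : S, G y*(w x*G x₀ - G x₀*φf x) =
          G x*(w (σ y)*G x₀ + G x₀*φf y) := by
        intro x y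
        have h1 := hw x y
        have h2 := hρ₀c x y
        rw [hφfact y] at h2
        have h3 := hρ₀c (σ y) x
        rw [hχσ y, hφfact x] at h3
        linear_combination h2 + h3 - G x₀*h1
      obtain ⟨γ, hγ⟩ : ∃ γ : ℂ, γ*G x₀ = w (σ x₀) + φf x₀ :=
        ⟨(w (σ x₀) + φf x₀)/G x₀, by field_simp⟩
      have hwform : ∀ x, w x = γ*G x + φf x := by
        intro x
        have h1 := hdagger x x₀
        have e : (G x₀*G x₀)*(w x - (γ*G x + φf x)) = 0 := by
          linear_combination h1 - G x*G x₀*hγ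
        have h4 := (mul_eq_zero.mp e).resolve_left (mul_ne_zero hx₀ hx₀)
        linear_combination h4
      have hsineσ : ∀ y u : S, φf (σ (y*u)) = φf (σ y)*G u + φf (σ u)*G y := by
        intro y u
        rw [hσmul, hsine (σ y) (σ u), hχσ y, hχσ u]
      have Rel : ∀ y : S, (φf (σ y) + φf y)*(G x₀*G x₀) =
          ((w x₀ - φf x₀) - γ*G x₀)*(G y*G x₀) := by
        intro y
        have h1 := hdagger x₀ y
        have h2 := hwform (σ y)
        rw [hχσ y] at h2
        linear_combination -h1 - (G x₀*G x₀)*h2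
      have hsc : (w x₀ - φf x₀) - γ*G x₀ = 0 := by
        have h1 := Rel (x₀*x₀)
        rw [hΨ x₀ x₀, hsineσ x₀ x₀, hsine x₀ x₀] at h1
        have h2 := Rel x₀
        have e : (((w x₀ - φf x₀) - γ*G x₀))*(G x₀*G x₀*G x₀) = 0 := by
          linear_combination h1 - 2*G x₀*h2
        exact (mul_eq_zero.mp e).resolve_right
          (mul_ne_zero (mul_ne_zero hx₀ hx₀) hx₀)
      have hφσ : ∀ x, φf (σ x) = - φf x := by
        intro x
        have h1 := Rel x
        rw [hsc, zero_mul] at h1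
        have h4 := (mul_eq_zero.mp h1).resolve_right (mul_ne_zero hx₀ hx₀)
        linear_combination h4
      have hφne : φf ≠ 0 := by
        intro h
        exact hφu₁ (by rw [h]; rfl)
      exact Or.inr (Or.inr ⟨G, φf, γ, hΨ, hGne, hφne, hsine, hχσ, hφσ, hwform,
        fun x => rfl⟩)
  · -- Case W-II : G not multiplicative
    push_neg at hΨ
    obtain ⟨u₀, v₀, hΨ0⟩ := hΨ
    have hΦne : ∃ x y, w (x*y) - w x*G y ≠ 0 := by
      by_contra hcon; push_neg at hcon
      have hΦ0 : ∀ x y : S, w (x*y) = w x*G y := by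
        intro x y; have := hcon x y; linear_combination this
      have hyx : ∀ x y : S, w y*G x = w x*G (σ y) := by
        intro x y
        have h1 := hw x (σ y); rw [hσinv] at h1
        linear_combination h1 - hΦ0 x (σ y) - hΦ0 y x
      have hwx₀ : w x₀ ≠ 0 := by
        intro h0; apply hwne; funext y
        have h1 := hyx x₀ y
        rw [h0, zero_mul] at h1
        exact (mul_eq_zero.mp h1).resolve_right hx₀
      have hGσm : ∀ x y : S, G (σ (x*y))*w x₀ = G (σ x)*G y*w x₀ := by
        intro x y
        have h1 := hyx x₀ (x*y)
        have h2 := hΦ0 x y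
        have h3 := hyx x₀ x
        linear_combination -h1 + G x₀*h2 + G y*h3
      have hfinal : ∀ y z : S, (G (y*z) - G y*G z)*(G x₀*(w x₀*w x₀)) = 0 := by
        intro y z
        have h1 := hGσm (σ x₀) (y*z)
        rw [hσinv] at h1
        have h2 := hGσm (σ x₀ * y) z
        have h3 := hGσm (σ x₀) y
        rw [hσinv] at h3
        simp only [mul_assoc] at h2
        linear_combination w x₀*(-h1 + h2 + G z*h3)
      apply hΨ0
      have h5 := hfinal u₀ v₀
      have h4 := (mul_eq_zero.mp h5).resolve_right
        (mul_ne_zero hx₀ (mul_ne_zero hwx₀ hwx₀))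
      linear_combination h4
    have hΨ0' : G (u₀*v₀) - G u₀*G v₀ ≠ 0 := sub_ne_zero.mpr hΨ0
    obtain ⟨a, ha⟩ : ∃ a : S → ℂ,
        ∀ x, (w (x*v₀) - w x*G v₀) = a x*(G (u₀*v₀) - G u₀*G v₀) :=
      ⟨fun x => (w (x*v₀) - w x*G v₀)/(G (u₀*v₀) - G u₀*G v₀),
        fun x => (div_mul_cancel₀ _ hΨ0').symm⟩
    obtain ⟨b, hb⟩ : ∃ b : S → ℂ, ∀ y, b y = G (y*u₀) - G y*G u₀ :=
      ⟨fun y => G (y*u₀) - G y*G u₀, fun y => rfl⟩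
    have hΦf : ∀ x y : S, w (x*y) = w x*G y + a x*b y := by
      intro x y
      have k := KEYW x y u₀ v₀
      have e : (G (u₀*v₀) - G u₀*G v₀)*((w (x*y) - w x*G y) - a x*b y) = 0 := by
        rw [hb y]
        linear_combination k + (G (y*u₀) - G y*G u₀)*ha x
      have h4 := (mul_eq_zero.mp e).resolve_left hΨ0'
      linear_combination h4
    obtain ⟨xh, yh, hxy⟩ := hΦne
    have hab2 : a xh*b yh ≠ 0 := by
      intro h; apply hxy
      linear_combination hΦf xh yh + h
    have haxh : a xh ≠ 0 := fun h => hab2 (by rw [h, zero_mul])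
    have hbyh : b yh ≠ 0 := fun h => hab2 (by rw [h, mul_zero])
    have s1 : ∀ y u : S, (G (y*u) - G y*G u)*b yh = b y*(G (u*yh) - G u*G yh) := by
      intro y u
      have k := KEYW xh y u yh
      have p1 := hΦf xh y
      have p2 := hΦf xh yh
      have e : a xh*((G (y*u) - G y*G u)*b yh - b y*(G (u*yh) - G u*G yh)) = 0 := by
        linear_combination -k + (G (u*yh) - G u*G yh)*p1 - (G (y*u) - G y*G u)*p2
      have h4 := (mul_eq_zero.mp e).resolve_left haxh
      linear_combination h4
    obtain ⟨κ, hκeq⟩ : ∃ κ : ℂ, (G (yh*yh) - G yh*G yh) = κ*(b yh*b yh) :=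
      ⟨(G (yh*yh) - G yh*G yh)/(b yh*b yh), by field_simp⟩
    have hκf : ∀ y u : S, G (y*u) = G y*G u + κ*(b y*b u) := by
      intro y u
      have h1 := s1 y u
      have h2 := s1 u yh
      have e : (b yh*b yh)*(G (y*u) - (G y*G u + κ*(b y*b u))) = 0 := by
        linear_combination b yh*h1 + b y*h2 + (b y*b u)*hκeq
      have h4 := (mul_eq_zero.mp e).resolve_left (mul_ne_zero hbyh hbyh)
      linear_combination h4
    have hκ0 : κ ≠ 0 := by
      intro h
      apply hΨ0
      have h2 := hκf u₀ v₀
      rw [h, zero_mul, add_zero] at h2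
      exact h2
    have hstar : ∀ x y z : S,
        a (x*y)*b z + a x*(b y*G z) = κ*(w x*(b y*b z)) + a x*b (y*z) := by
      intro x y z
      have e1 := hΦf (x*y) z
      have e2 := hΦf x (y*z)
      have e3 := hΦf x y
      have e4 := hκf y z
      simp only [mul_assoc] at e1
      linear_combination -e1 + e2 - G z*e3 + w x*e4
    obtain ⟨ef, hef⟩ : ∃ ef : S → ℂ, ∀ y, b (y*yh) - b y*G yh = ef y*b yh :=
      ⟨fun y => (b (y*yh) - b y*G yh)/b yh, fun y => by field_simp⟩
    have halaw : ∀ x y : S, a (x*y) = κ*(w x*b y) + a x*ef y := by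
      intro x y
      have h1 := hstar x y yh
      have h2 := hef y
      have e : b yh*(a (x*y) - (κ*(w x*b y) + a x*ef y)) = 0 := by
        linear_combination h1 + a x*h2
      have h4 := (mul_eq_zero.mp e).resolve_left hbyh
      linear_combination h4
    have hblaw : ∀ y z : S, b (y*z) = b y*G z + ef y*b z := by
      intro y z
      have h1 := hstar xh y z
      have h2 := halaw xh y
      have e : a xh*(b (y*z) - (b y*G z + ef y*b z)) = 0 := by
        linear_combination -h1 + b z*h2
      have h4 := (mul_eq_zero.mp e).resolve_left haxh
      linear_combination h4
    have hclaw : ∀ x y : S, b (x*y) = G x*b y + ef y*b x := by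
      intro x y
      have e1 := hκf x (y*yh)
      have e2 := hκf (x*y) yh
      have e3 := hκf x y
      have e4 := hκf y yh
      have e5 := hblaw y yh
      simp only [mul_assoc] at e2
      have e : (κ*b yh)*(b (x*y) - (G x*b y + ef y*b x)) = 0 := by
        linear_combination -e2 + e1 - G yh*e3 + G x*e4 + κ*b x*e5
      have h4 := (mul_eq_zero.mp e).resolve_left (mul_ne_zero hκ0 hbyh)
      linear_combination h4
    obtain ⟨μ, hμeq⟩ : ∃ μ : ℂ, G yh - ef yh = μ*b yh :=
      ⟨(G yh - ef yh)/b yh, by field_simp⟩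
    have hGe : ∀ z : S, G z - ef z = μ*b z := by
      intro z
      have h1 := hblaw yh z
      have h2 := hclaw yh z
      have e : b yh*((G z - ef z) - μ*b z) = 0 := by
        linear_combination -h1 + h2 + b z*hμeq
      have h4 := (mul_eq_zero.mp e).resolve_left hbyh
      linear_combination h4
    have hL4 : ∀ y z : S, b (y*z) = b y*G z + G y*b z - μ*(b y*b z) := by
      intro y z
      have h1 := hblaw y z
      have h2 := hGe y
      linear_combination h1 - b z*h2
    have hL5 : ∀ x y : S, w (σ y*x) = w x*G y - a x*b y := by
      intro x y; linear_combination hw x y - hΦf x y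
    have hΩ : ∀ x y : S, w x*G (σ y) - a x*b (σ y) = w y*G x + a y*b x := by
      intro x y
      have h1 := hL5 x (σ y); rw [hσinv] at h1
      have h2 := hΦf y x
      linear_combination -h1 + h2
    by_cases hdep : ∃ lam : ℂ, ∀ x, b x = lam*G x
    · exfalso
      obtain ⟨lam, hlam⟩ := hdep
      have hlam0 : lam ≠ 0 := by
        intro h; apply hbyh; rw [hlam yh, h, zero_mul]
      have hGc : ∀ x y : S, G (x*y) = (1 + κ*lam^2)*(G x*G y) := by
        intro x y
        have h1 := hκf x y
        rw [hlam x, hlam y] at h1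
        linear_combination h1
      have hΩ' : ∀ x y : S, (w x - lam*a x)*G (σ y) = (w y + lam*a y)*G x := by
        intro x y
        have h1 := hΩ x y
        rw [hlam (σ y), hlam x] at h1
        linear_combination h1
      have hu₁ : ∃ xt, w xt - lam*a xt ≠ 0 := by
        by_contra hcc; push_neg at hcc
        apply hwne; funext y
        have h1 := hΩ' x₀ y
        rw [hcc x₀, zero_mul] at h1
        have h2 := (mul_eq_zero.mp h1.symm).resolve_right hx₀
        have h3 := hcc y
        show w y = 0
        linear_combination (h2 + h3)/2
      obtain ⟨xt, hxt⟩ := hu₁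
      obtain ⟨ρ₁, hρ₁⟩ : ∃ ρ₁ : ℂ, ρ₁*G x₀ = w (σ x₀) + lam*a (σ x₀) :=
        ⟨(w (σ x₀) + lam*a (σ x₀))/G x₀, by field_simp⟩
      have hu1G : ∀ x, w x - lam*a x = ρ₁*G x := by
        intro x
        have h1 := hΩ' x (σ x₀); rw [hσinv] at h1
        have e : G x₀*((w x - lam*a x) - ρ₁*G x) = 0 := by
          linear_combination h1 - G x*hρ₁
        have h4 := (mul_eq_zero.mp e).resolve_left hx₀
        linear_combination h4
      have hρ₁0 : ρ₁ ≠ 0 := by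
        intro h; apply hxt; rw [hu1G xt, h, zero_mul]
      have hu2G : ∀ y, w y + lam*a y = ρ₁*G (σ y) := by
        intro y
        have h1 := hΩ' x₀ y
        rw [hu1G x₀] at h1
        have e : G x₀*((w y + lam*a y) - ρ₁*G (σ y)) = 0 := by
          linear_combination -h1
        have h4 := (mul_eq_zero.mp e).resolve_left hx₀
        linear_combination h4
      have hkey : ∀ x y : S,
          (1 + κ*lam^2)*(G x*G y + G (σ x)*G (σ y)) = 2*(G (σ x)*G y) := by
        intro x y
        have e1 := hΦf x y
        rw [hlam y] at e1
        have e2 := hu1G (x*y)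
        have e3 := hu2G (x*y)
        have e4 : G (σ (x*y)) = (1 + κ*lam^2)*(G (σ x)*G (σ y)) := by
          rw [hσmul]; exact hGc (σ x) (σ y)
        have e5 := hGc x y
        have e7 := hu2G x
        have e : ρ₁*((1 + κ*lam^2)*(G x*G y + G (σ x)*G (σ y)) - 2*(G (σ x)*G y)) = 0 := by
          linear_combination -e2 - e3 - ρ₁*e4 - ρ₁*e5 + 2*e1 + 2*G y*e7
        have h4 := (mul_eq_zero.mp e).resolve_left hρ₁0
        linear_combination h4
      by_cases hGdep : ∃ η : ℂ, ∀ x, G (σ x) = η*G x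
      · obtain ⟨η, hη⟩ := hGdep
        have hη2 : η*η = 1 := by
          have h1 := hη (σ x₀); rw [hσinv] at h1
          have h2 := hη x₀
          have e : G x₀*(η*η - 1) = 0 := by linear_combination -h1 - η*h2
          have h4 := (mul_eq_zero.mp e).resolve_left hx₀
          linear_combination h4
        have hcbar : (1 + κ*lam^2) = η := by
          have h1 := hkey x₀ x₀
          rw [hη x₀] at h1
          have e : (G x₀*G x₀)*(2*(1 + κ*lam^2) - 2*η) = 0 := by
            linear_combination h1 - (1+κ*lam^2)*(G x₀*G x₀)*hη2
          have h4 := (mul_eq_zero.mp e).resolve_left (mul_ne_zero hx₀ hx₀)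
          linear_combination h4/2
        have hηcase : η = 1 ∨ η = -1 := by
          have h : (η - 1)*(η + 1) = 0 := by linear_combination hη2
          rcases mul_eq_zero.mp h with h' | h'
          · left; linear_combination h'
          · right; linear_combination h'
        rcases hηcase with hη1 | hη1
        · rw [hη1] at hcbar
          have h' : κ*lam^2 = 0 := by linear_combination hcbar
          rcases mul_eq_zero.mp h' with h'' | h''
          · exact hκ0 h''
          · exact hlam0 (pow_eq_zero_iff (by norm_num : (2:ℕ) ≠ 0) |>.mp h'')
        · rw [hη1] at hcbar hη
          have h1 : G (σ (x₀*x₀)) = (1+κ*lam^2)*(G (σ x₀)*G (σ x₀)) := by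
            rw [hσmul]; exact hGc (σ x₀) (σ x₀)
          rw [hη x₀] at h1
          have h2 := hη (x₀*x₀)
          have h3 := hGc x₀ x₀
          have e : (G x₀*G x₀)*(2*(1+κ*lam^2)) = 0 := by
            linear_combination -h1 + h2 - h3
          have h4 := (mul_eq_zero.mp e).resolve_left (mul_ne_zero hx₀ hx₀)
          rw [hcbar] at h4
          norm_num at h4
      · push_neg at hGdep
        have hindG : ∀ c d : ℂ, (∀ x, c*G x + d*G (σ x) = 0) → c = 0 ∧ d = 0 := by
          intro c d h
          by_cases hd : d = 0
          · subst hd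
            refine ⟨?_, rfl⟩
            have h2 := h x₀
            rw [zero_mul, add_zero] at h2
            exact (mul_eq_zero.mp h2).resolve_right hx₀
          · exfalso
            obtain ⟨x', hx'⟩ := hGdep (-c/d)
            apply hx'
            have h2 := h x'
            field_simp
            linear_combination h2
        have h5 := hindG ((1+κ*lam^2)*G x₀) ((1+κ*lam^2)*G (σ x₀) - 2*G x₀)
          (fun x => by linear_combination hkey x x₀)
        have hc0 : (1+κ*lam^2) = 0 :=
          (mul_eq_zero.mp h5.1).resolve_right hx₀
        have h6 := hkey (σ x₀) x₀
        rw [hc0, hσinv, zero_mul] at h6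
        have h7 : G x₀*G x₀ = 0 := by linear_combination -h6/2
        exact (mul_ne_zero hx₀ hx₀) h7
    · -- {G, b} linearly independent : regular case
      have hind : ∀ c d : ℂ, (∀ x, c*G x + d*b x = 0) → c = 0 ∧ d = 0 := by
        intro c d h
        by_cases hd : d = 0
        · subst hd
          refine ⟨?_, rfl⟩
          have h2 := h x₀
          rw [zero_mul, add_zero] at h2
          exact (mul_eq_zero.mp h2).resolve_right hx₀
        · exfalso
          apply hdep
          refine ⟨-c/d, fun x => ?_⟩
          have h2 := h x
          field_simp
          linear_combination h2
      have hindσ : ∀ c d : ℂ, (∀ x, c*G (σ x) + d*b (σ x) = 0) → c = 0 ∧ d = 0 := by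
        intro c d h
        exact hind c d (fun x => by have := h (σ x); rwa [hσinv] at this)
      have hdet : ∃ y₁ y₂ : S, G (σ y₁)*b (σ y₂) - G (σ y₂)*b (σ y₁) ≠ 0 := by
        by_contra hc; push_neg at hc
        have h2 := hindσ (b (σ (σ x₀))) (-G (σ (σ x₀))) (fun y => by
          linear_combination -hc (σ x₀) y)
        have h3 := neg_eq_zero.mp h2.2
        rw [hσinv] at h3
        exact hx₀ h3
      obtain ⟨y₁, y₂, hΔ⟩ := hdet
      obtain ⟨p, r, hpr⟩ : ∃ p r : ℂ, ∀ x, w x = p*G x + r*b x := by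
        refine ⟨(b (σ y₂)*w y₁ - b (σ y₁)*w y₂)/(G (σ y₁)*b (σ y₂) - G (σ y₂)*b (σ y₁)),
               (b (σ y₂)*a y₁ - b (σ y₁)*a y₂)/(G (σ y₁)*b (σ y₂) - G (σ y₂)*b (σ y₁)),
               fun x => ?_⟩
        have e1 := hΩ x y₁
        have e2 := hΩ x y₂
        have e : (G (σ y₁)*b (σ y₂) - G (σ y₂)*b (σ y₁)) * w x =
            (b (σ y₂)*w y₁ - b (σ y₁)*w y₂)*G x + (b (σ y₂)*a y₁ - b (σ y₁)*a y₂)*b x := by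
          linear_combination b (σ y₂)*e1 - b (σ y₁)*e2
        rw [div_mul_eq_mul_div, div_mul_eq_mul_div, ← add_div, eq_div_iff hΔ]
        linear_combination e
      obtain ⟨p', r', hpr'⟩ : ∃ p' r' : ℂ, ∀ x, a x = p'*G x + r'*b x := by
        have hΔ' : G (σ y₂)*b (σ y₁) - G (σ y₁)*b (σ y₂) ≠ 0 := fun h => hΔ (by linear_combination -h)
        refine ⟨(G (σ y₁)*w y₂ - G (σ y₂)*w y₁)/(G (σ y₂)*b (σ y₁) - G (σ y₁)*b (σ y₂)),
               (G (σ y₁)*a y₂ - G (σ y₂)*a y₁)/(G (σ y₂)*b (σ y₁) - G (σ y₁)*b (σ y₂)),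
               fun x => ?_⟩
        have e1 := hΩ x y₁
        have e2 := hΩ x y₂
        have e : (G (σ y₂)*b (σ y₁) - G (σ y₁)*b (σ y₂)) * a x =
            (G (σ y₁)*w y₂ - G (σ y₂)*w y₁)*G x + (G (σ y₁)*a y₂ - G (σ y₂)*a y₁)*b x := by
          linear_combination G (σ y₁)*e2 - G (σ y₂)*e1
        field_simp
        linear_combination e
      have hext : ∀ c₁ c₂ c₃ c₄ : ℂ,
          (∀ x y, c₁*(G x*G y) + c₂*(G x*b y) + c₃*(b x*G y) + c₄*(b x*b y) = 0) →
          c₁ = 0 ∧ c₂ = 0 ∧ c₃ = 0 ∧ c₄ = 0 := by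
        intro c₁ c₂ c₃ c₄ h
        have hx : ∀ x, (c₁*G x + c₃*b x) = 0 ∧ (c₂*G x + c₄*b x) = 0 := by
          intro x
          exact hind _ _ (fun y => by linear_combination h x y)
        have h1 := hind c₁ c₃ (fun x => (hx x).1)
        have h2 := hind c₂ c₄ (fun x => (hx x).2)
        exact ⟨h1.1, h2.1, h1.2, h2.2⟩
      have hco : p' = r ∧ r' = κ*p - μ*r := by
        have h0 : ∀ x y, 0*(G x*G y) + (r - p')*(G x*b y) + 0*(b x*G y) +
            ((κ*p - μ*r) - r')*(b x*b y) = 0 := by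
          intro x y
          have e1 := hΦf x y
          have e2 := hκf x y
          have e3 := hL4 x y
          have e4 := hpr (x*y)
          have e5 := hpr x
          have e6 := hpr' x
          have e7 := hpr y
          linear_combination e1 - e4 - p*e2 - r*e3 + G y*e5 + b y*e6
        obtain ⟨-, h2, -, h4⟩ := hext _ _ _ _ h0
        constructor
        · linear_combination -h2
        · linear_combination -h4
      obtain ⟨hp'r, hr'⟩ := hco
      have hσrel : ∀ y, (p*G (σ y) - r*b (σ y) - (p*G y + r*b y) = 0) ∧
          (r*G (σ y) - r'*b (σ y) - (r*G y + r'*b y) = 0) := by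
        intro y
        have h0 : ∀ x, (p*G (σ y) - r*b (σ y) - (p*G y + r*b y))*G x +
            (r*G (σ y) - r'*b (σ y) - (r*G y + r'*b y))*b x = 0 := by
          intro x
          have e1 := hΩ x y
          have e2 := hpr x
          have e3 := hpr' x
          have e4 := hpr y
          have e5 := hpr' y
          rw [hp'r] at e3 e5
          linear_combination e1 - G (σ y)*e2 + b (σ y)*e3 + G x*e4 + b x*e5
        exact hind _ _ h0
      have hbσ : ∀ y, b (σ y) = - b y := by
        by_cases hr : r = 0
        · have hp0 : p ≠ 0 := by
            intro hp; apply hwne; funext x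
            have := hpr x; rw [hp, hr, zero_mul, zero_mul, add_zero] at this
            exact this
          have hr'0 : r' ≠ 0 := by
            rw [hr'] at *
            rw [hr]
            simpa using mul_ne_zero hκ0 hp0
          intro y
          have h2 := (hσrel y).2
          rw [hr] at h2
          have e : r'*(b (σ y) + b y) = 0 := by linear_combination -h2
          have h4 := (mul_eq_zero.mp e).resolve_left hr'0
          linear_combination h4
        · intro y
          have h1 := (hσrel y).1
          have h1' := (hσrel (σ y)).1
          rw [hσinv] at h1'
          have e : r*(b (σ y) + b y) = 0 := by linear_combination (-h1 - h1')/2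
          have h4 := (mul_eq_zero.mp e).resolve_left hr
          linear_combination h4
      have hGσ : ∀ y, G (σ y) = G y := by
        by_cases hr : r = 0
        · have hp0 : p ≠ 0 := by
            intro hp; apply hwne; funext x
            have := hpr x; rw [hp, hr, zero_mul, zero_mul, add_zero] at this
            exact this
          intro y
          have h1 := (hσrel y).1
          rw [hr, hbσ y] at h1
          have e : p*(G (σ y) - G y) = 0 := by linear_combination h1
          have h4 := (mul_eq_zero.mp e).resolve_left hp0
          linear_combination h4
        · intro y
          have h2 := (hσrel y).2
          rw [hbσ y] at h2
          have e : r*(G (σ y) - G y) = 0 := by linear_combination h2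
          have h4 := (mul_eq_zero.mp e).resolve_left hr
          linear_combination h4
      obtain ⟨s, hs⟩ := exists_sq (μ*μ + 4*κ)
      obtain ⟨t, htroot⟩ : ∃ t : ℂ, t*t + μ*t - κ = 0 :=
        ⟨(-μ + s)/2, by field_simp; linear_combination hs⟩
      have ht0 : t ≠ 0 := by
        intro h; rw [h] at htroot; apply hκ0; linear_combination -htroot
      have hχmul : ∀ x y : S, (G (x*y) + t*b (x*y)) = (G x + t*b x)*(G y + t*b y) := by
        intro x y
        linear_combination hκf x y + t*hL4 x y - (b x*b y)*htroot
      have hχsig : ∀ x : S, G (σ x) + t*b (σ x) = G x - t*b x := by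
        intro x; rw [hGσ x, hbσ x]; ring
      refine Or.inr (Or.inl ⟨fun x => G x + t*b x, p/2 + r/(2*t), p/2 - r/(2*t),
        hχmul, ?_, ?_, ?_⟩)
      · intro heq
        have h1 := congrFun heq yh
        simp only at h1
        rw [hχsig yh] at h1
        have e : (2*t)*b yh = 0 := by linear_combination h1
        rcases mul_eq_zero.mp e with h' | h'
        · exact ht0 (by linear_combination h'/2)
        · exact hbyh h'
      · intro x
        simp only
        rw [hχsig x]
        have h1 := hpr x
        field_simp
        linear_combination (2*t)*h1
      · intro x
        simp only
        rw [hχsig x]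
        ring

/-- Description of the solutions `(f, g)` with `g ≠ 0` of the Kannappan–Wilson
functional equation `f(x y z₀) + f(σ(y) x z₀) = 2 f(x) g(y)` on a semigroup,
where `z₀` is a fixed central element. -/
theorem kannappan_wilson_dirac_solutions {S : Type*} [Semigroup S] (σ : S → S)
    (hσmul : ∀ x y : S, σ (x * y) = σ x * σ y) (hσinv : ∀ x : S, σ (σ x) = x)
    (z₀ : S) (hz₀ : ∀ x : S, x * z₀ = z₀ * x)
    (f g : S → ℂ) (hg : g ≠ 0) :
    (∀ x y : S, f (x * y * z₀) + f (σ y * x * z₀) = 2 * f x * g y) ↔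
      (f = 0) ∨
      (∃ (m : S → ℂ) (lam₂ : ℂ),
        (∀ x y : S, m (x * y) = m x * m y) ∧ lam₂ ≠ 0 ∧ m z₀ ≠ 0 ∧
        (∀ x : S, f x = lam₂ * m x) ∧
        (∀ x : S, g x = (m z₀ / 2) * (m x + m (σ x)))) ∨
      (∃ (χ : S → ℂ) (α₁ β₁ : ℂ),
        (∀ x y : S, χ (x * y) = χ x * χ y) ∧ (α₁, β₁) ≠ (0, 0) ∧
        χ ≠ (fun x => χ (σ x)) ∧ χ z₀ = χ (σ z₀) ∧ χ z₀ ≠ 0 ∧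
        (∀ x : S, f x = α₁ * χ x + β₁ * χ (σ x)) ∧
        (∀ x : S, g x = (χ z₀ / 2) * (χ x + χ (σ x)))) ∨
      (∃ (χ φ : S → ℂ) (lam γ₁ : ℂ),
        (∀ x y : S, χ (x * y) = χ x * χ y) ∧ χ ≠ 0 ∧
        φ ≠ 0 ∧ (∀ x y : S, φ (x * y) = φ x * χ y + φ y * χ x) ∧
        lam ≠ 0 ∧
        (∀ x : S, χ (σ x) = χ x) ∧ (∀ x : S, φ (σ x) = -φ x) ∧
        χ z₀ ≠ 0 ∧ φ z₀ = 0 ∧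
        (∀ x : S, f x = lam * (γ₁ * χ x + φ x)) ∧
        (∀ x : S, g x = χ z₀ * χ x)) := by
  constructor
  · intro hE
    by_cases hf0 : f = 0
    · exact Or.inl hf0
    obtain ⟨xf, hxf⟩ : ∃ x, f x ≠ 0 := by
      by_contra h; push_neg at h; exact hf0 (funext fun x => h x)
    obtain ⟨y₀, hy₀⟩ : ∃ y, g y ≠ 0 := by
      by_contra h; push_neg at h; exact hg (funext fun x => h x)
    have hEf : ∀ x y : S, f (x*(y*z₀)) + f (σ y*(x*z₀)) = 2*f x*g y := by
      intro x y; have := hE x y; simpa [mul_assoc] using this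
    have hcenz : ∀ u : S, z₀*u = u*z₀ := fun u => (hz₀ u).symm
    have hzsw : ∀ a : S, z₀*(a*z₀) = a*(z₀*z₀) := fun a => by
      rw [← mul_assoc, ← hz₀ a, mul_assoc]
    have hWZ : ∀ (φ : S → ℂ), (∀ x y, φ (x*(y*z₀)) + φ (σ y*(x*z₀)) = 2*φ x*g y) →
        (∀ x y, φ (x*(y*(z₀*z₀))) + φ (σ y*(x*(z₀*z₀))) = 2*φ (x*z₀)*g y) := by
      intro φ hφ x y
      have h1 := hφ (x*z₀) y
      simp only [mul_assoc] at h1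
      rw [hzsw y] at h1
      linear_combination h1
    have LZ1 : ∀ (φ : S → ℂ), (∀ x y, φ (x*(y*z₀)) + φ (σ y*(x*z₀)) = 2*φ x*g y) →
        ∀ x u v : S, φ (x*(u*(v*z₀))) = φ (x*u)*g v - φ (σ v*x)*g u + φ x*g (u*v) := by
      intro φ hφ x u v
      have h1 := hφ x (u*v)
      have h2 := hφ (x*u) v
      have h3 := hφ (σ v*x) u
      simp only [hσmul, mul_assoc] at h1 h2 h3
      linear_combination (h1 + h2 - h3)/2
    have LZ2 : ∀ (φ : S → ℂ), (∀ x y, φ (x*(y*z₀)) + φ (σ y*(x*z₀)) = 2*φ x*g y) →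
        ∀ x u v : S, φ (x*(u*(v*(z₀*z₀)))) =
          φ (x*(u*z₀))*g v + φ (x*(v*z₀))*g u + φ (x*z₀)*g (u*v) - 2*φ x*(g u*g v) := by
      intro φ hφ x u v
      have h1 := LZ1 (fun x => φ (x*z₀)) (fun x y => by
        simpa [mul_assoc] using hWZ φ hφ x y) x u v
      simp only [mul_assoc] at h1
      have h2 := hφ x v
      linear_combination h1 - g u*h2
    have Q6 : ∀ (φ : S → ℂ), (∀ x y, φ (x*(y*z₀)) + φ (σ y*(x*z₀)) = 2*φ x*g y) →
        ∀ x y u v : S, φ (x*z₀)*g (y*(u*v)) + (φ (x*u) + φ (σ u*x))*(g y*g v)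
          = φ x*(g y*g (u*v) + g (y*u)*g v + g (y*v)*g u) := by
      intro φ hφ x y u v
      have q1 := LZ2 φ hφ x y (u*v)
      have q2 := LZ2 φ hφ (x*y) u v
      have z1 := LZ1 φ hφ x u v
      have z2 := LZ1 φ hφ x y u
      have z3 := LZ1 φ hφ x y v
      simp only [mul_assoc] at q1 q2
      linear_combination -q1 + q2 - g y*z1 + g v*z2 + g u*z3
    obtain ⟨AN, hAN⟩ : ∃ AN : S → ℂ,
        ∀ u, AN u = g y₀*g (u*y₀) + g (y₀*u)*g y₀ + g (y₀*y₀)*g u :=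
      ⟨fun u => g y₀*g (u*y₀) + g (y₀*u)*g y₀ + g (y₀*y₀)*g u, fun u => rfl⟩
    have TREP : ∀ (φ : S → ℂ), (∀ x y, φ (x*(y*z₀)) + φ (σ y*(x*z₀)) = 2*φ x*g y) →
        ∀ x u : S, (φ (x*u) + φ (σ u*x))*(g y₀*g y₀) =
          φ x*AN u - φ (x*z₀)*g (y₀*(u*y₀)) := by
      intro φ hφ x u
      have h1 := Q6 φ hφ x y₀ u y₀
      rw [hAN u]
      linear_combination h1
    have T2 : ∀ (φ : S → ℂ), (∀ x y, φ (x*(y*z₀)) + φ (σ y*(x*z₀)) = 2*φ x*g y) →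
        ∀ x u : S, 2*φ x*g u*(g y₀*g y₀) =
          φ (x*z₀)*AN u - φ (x*(z₀*z₀))*g (y₀*(u*y₀)) := by
      intro φ hφ x u
      have h1 := TREP φ hφ (x*z₀) u
      simp only [mul_assoc] at h1
      rw [hcenz u] at h1
      rw [hφ x u] at h1
      exact h1
    have Q6' : ∀ (φ : S → ℂ), (∀ x y, φ (x*(y*z₀)) + φ (σ y*(x*z₀)) = 2*φ x*g y) →
        ∀ y u v x : S,
          φ (x*z₀)*(g (y*(u*v))*(g y₀*g y₀) - g (y₀*(u*y₀))*(g y*g v))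
          = φ x*((g y*g (u*v) + g (y*u)*g v + g (y*v)*g u)*(g y₀*g y₀) - AN u*(g y*g v)) := by
      intro φ hφ y u v x
      have h1 := Q6 φ hφ x y u v
      have h2 := TREP φ hφ x u
      linear_combination (g y₀*g y₀)*h1 - (g y*g v)*h2
    -- LEMMA A : f(x z₀) = c f(x)
    obtain ⟨c, hc0, hc⟩ : ∃ c : ℂ, c ≠ 0 ∧ ∀ x, f (x*z₀) = c*f x := by
      have hfzcontra : (∀ x, f (x*z₀) = 0) → False := by
        intro hh
        apply hxf
        have h1 := hEf xf y₀
        have e1 : f (xf*(y₀*z₀)) = 0 := by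
          have := hh (xf*y₀); simpa [mul_assoc] using this
        have e2 : f (σ y₀*(xf*z₀)) = 0 := by
          have := hh (σ y₀*xf); simpa [mul_assoc] using this
        rw [e1, e2] at h1
        have h2 : f xf*(2*g y₀) = 0 := by linear_combination -h1
        exact (mul_eq_zero.mp h2).resolve_right (mul_ne_zero two_ne_zero hy₀)
      by_cases hsplit : ∀ y u v : S, g (y*(u*v))*(g y₀*g y₀) = g (y₀*(u*y₀))*(g y*g v)
      case neg =>
        push_neg at hsplit
        obtain ⟨ys, us, vs, hD⟩ := hsplit
        have hD' : g (ys*(us*vs))*(g y₀*g y₀) - g (y₀*(us*y₀))*(g ys*g vs) ≠ 0 :=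
          sub_ne_zero.mpr hD
        have hcd : ∀ x, f (x*z₀) =
            (((g ys*g (us*vs) + g (ys*us)*g vs + g (ys*vs)*g us)*(g y₀*g y₀)
              - AN us*(g ys*g vs))
            /(g (ys*(us*vs))*(g y₀*g y₀) - g (y₀*(us*y₀))*(g ys*g vs)))*f x := by
          intro x
          have h1 := Q6' f hEf ys us vs x
          rw [div_mul_eq_mul_div, eq_div_iff hD']
          linear_combination h1
        refine ⟨_, ?_, hcd⟩
        intro hcz
        apply hfzcontra
        intro x
        rw [hcd x, hcz, zero_mul]
      case pos =>
        have hA : ∀ y u v : S,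
            (g y*g (u*v) + g (y*u)*g v + g (y*v)*g u)*(g y₀*g y₀) = AN u*(g y*g v) := by
          intro y u v
          have h1 := Q6' f hEf y u v xf
          rw [hsplit y u v, sub_self, mul_zero] at h1
          have h2 := (mul_eq_zero.mp h1.symm).resolve_left hxf
          linear_combination h2
        by_cases hg3 : ∀ u : S, g (y₀*(u*y₀)) = 0
        · have hT : ∀ x u, 2*f x*g u*(g y₀*g y₀) = f (x*z₀)*AN u := by
            intro x u
            have := T2 f hEf x u
            rw [hg3 u, mul_zero, sub_zero] at this
            exact this
          by_cases hq : g (y₀*y₀) = 0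
          · exfalso
            apply hxf
            have h1 := hT xf y₀
            rw [hAN y₀, hq] at h1
            have h2 : f xf*(2*g y₀*(g y₀*g y₀)) = 0 := by linear_combination h1
            exact (mul_eq_zero.mp h2).resolve_right
              (mul_ne_zero (mul_ne_zero two_ne_zero hy₀) (mul_ne_zero hy₀ hy₀))
          · have hlin : ∀ x, (3*g (y₀*y₀))*f (x*z₀) = (2*(g y₀*g y₀))*f x := by
              intro x
              have h1 := hT x y₀
              rw [hAN y₀] at h1
              have e : g y₀*((3*g (y₀*y₀))*f (x*z₀) - (2*(g y₀*g y₀))*f x) = 0 := by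
                linear_combination -h1
              have h4 := (mul_eq_zero.mp e).resolve_left hy₀
              linear_combination h4
            refine ⟨2*(g y₀*g y₀)/(3*g (y₀*y₀)),
              div_ne_zero (mul_ne_zero two_ne_zero (mul_ne_zero hy₀ hy₀))
                (mul_ne_zero three_ne_zero hq), fun x => ?_⟩
            rw [div_mul_eq_mul_div, eq_div_iff (mul_ne_zero three_ne_zero hq)]
            linear_combination hlin x
        · push_neg at hg3
          obtain ⟨u₁, hu₁⟩ := hg3
          have hε : ∀ y v : S, g y*g (u₁*v) = g (y*u₁)*g v := by
            intro y v
            have h1 := hsplit y u₁ (u₁*v)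
            have h2 := hsplit (y*u₁) u₁ v
            simp only [mul_assoc] at h2
            have e : g (y₀*(u₁*y₀))*(g y*g (u₁*v) - g (y*u₁)*g v) = 0 := by
              linear_combination h2 - h1
            have h4 := (mul_eq_zero.mp e).resolve_left hu₁
            linear_combination h4
          have hlamA : ∀ y, g (y*u₁)*g y₀ = g y*g (u₁*y₀) := fun y => by
            linear_combination -hε y y₀
          have hy0u : g (y₀*u₁) = g (u₁*y₀) := by
            have h1 := hlamA y₀
            have e : g y₀*(g (y₀*u₁) - g (u₁*y₀)) = 0 := by linear_combination h1
            have h4 := (mul_eq_zero.mp e).resolve_left hy₀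
            linear_combination h4
          have hlamB : ∀ v, g (u₁*v)*g y₀ = g (u₁*y₀)*g v := by
            intro v
            have h1 := hε y₀ v
            rw [hy0u] at h1
            linear_combination h1
          by_cases hgu : g u₁ = 0
          · exfalso
            have hAu : g (u₁*y₀) = 0 := by
              have h1 := hA u₁ y₀ y₀
              rw [hgu] at h1
              have e : g (u₁*y₀)*(2*g y₀*(g y₀*g y₀)) = 0 := by
                linear_combination h1
              exact (mul_eq_zero.mp e).resolve_right
                (mul_ne_zero (mul_ne_zero two_ne_zero hy₀) (mul_ne_zero hy₀ hy₀))
            have hyu0 : ∀ y, g (y*u₁) = 0 := fun y => by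
              have h1 := hlamA y
              rw [hAu, mul_zero] at h1
              exact (mul_eq_zero.mp h1).resolve_right hy₀
            have huv0 : ∀ v, g (u₁*v) = 0 := fun v => by
              have h1 := hlamB v
              rw [hAu, zero_mul] at h1
              exact (mul_eq_zero.mp h1).resolve_right hy₀
            have hANu : AN u₁ = 0 := by
              have h1 := hA y₀ u₁ y₀
              rw [huv0 y₀, hyu0 y₀, hgu] at h1
              have e : AN u₁*(g y₀*g y₀) = 0 := by linear_combination -h1
              exact (mul_eq_zero.mp e).resolve_right (mul_ne_zero hy₀ hy₀)
            have hk0 : ∀ x, f (x*(z₀*z₀)) = 0 := by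
              intro x
              have h1 := T2 f hEf x u₁
              rw [hANu, hgu] at h1
              have h2 : f (x*(z₀*z₀))*g (y₀*(u₁*y₀)) = 0 := by linear_combination h1
              exact (mul_eq_zero.mp h2).resolve_right hu₁
            have hh0 : ∀ x, f (x*z₀) = 0 := by
              intro x
              have h1 := hWZ f hEf x y₀
              have e1 : f (x*(y₀*(z₀*z₀))) = 0 := by
                have := hk0 (x*y₀); simpa [mul_assoc] using this
              have e2 : f (σ y₀*(x*(z₀*z₀))) = 0 := by
                have := hk0 (σ y₀*x); simpa [mul_assoc] using this
              rw [e1, e2] at h1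
              have h2 : f (x*z₀)*(2*g y₀) = 0 := by linear_combination -h1
              exact (mul_eq_zero.mp h2).resolve_right (mul_ne_zero two_ne_zero hy₀)
            exact hfzcontra hh0
          · by_cases hlamZ : g (u₁*y₀) = 0
            · exfalso
              have hyu0 : ∀ y, g (y*u₁) = 0 := fun y => by
                have h1 := hlamA y
                rw [hlamZ, mul_zero] at h1
                exact (mul_eq_zero.mp h1).resolve_right hy₀
              have huv0 : ∀ v, g (u₁*v) = 0 := fun v => by
                have h1 := hlamB v
                rw [hlamZ, zero_mul] at h1
                exact (mul_eq_zero.mp h1).resolve_right hy₀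
              have hstar : ∀ y v, g (y*v)*g u₁*(g y₀*g y₀) = AN u₁*(g y*g v) := by
                intro y v
                have h1 := hA y u₁ v
                rw [huv0 v, hyu0 y] at h1
                linear_combination h1
              have hAN0 : AN u₁ = 0 := by
                have h1 := hstar y₀ u₁
                rw [hyu0 y₀] at h1
                have e : AN u₁*(g y₀*g u₁) = 0 := by linear_combination -h1
                exact (mul_eq_zero.mp e).resolve_right (mul_ne_zero hy₀ hgu)
              have hg20 : ∀ y v, g (y*v) = 0 := by
                intro y v
                have h1 := hstar y v
                rw [hAN0, zero_mul] at h1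
                have h2 := (mul_eq_zero.mp h1).resolve_right (mul_ne_zero hy₀ hy₀)
                exact (mul_eq_zero.mp h2).resolve_right hgu
              exact hu₁ (hg20 y₀ (u₁*y₀))
            · have hmul0 : ∀ y v : S, g (y*v)*(g u₁*(g y₀*(g y₀*g y₀))) =
                  g y*g v*(AN u₁*g y₀ - 2*g (u₁*y₀)*(g y₀*g y₀)) := by
                intro y v
                have h1 := hA y u₁ v
                have h2 := hlamA y
                have h3 := hlamB v
                linear_combination g y₀*h1 - g v*(g y₀*g y₀)*h2 - g y*(g y₀*g y₀)*h3
              obtain ⟨ν, hν⟩ : ∃ ν : ℂ,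
                  ν*(g u₁*(g y₀*(g y₀*g y₀))) = AN u₁*g y₀ - 2*g (u₁*y₀)*(g y₀*g y₀) :=
                ⟨(AN u₁*g y₀ - 2*g (u₁*y₀)*(g y₀*g y₀))/(g u₁*(g y₀*(g y₀*g y₀))),
                  div_mul_cancel₀ _ (mul_ne_zero hgu (mul_ne_zero hy₀ (mul_ne_zero hy₀ hy₀)))⟩
              have hgm : ∀ y v : S, g (y*v) = ν*(g y*g v) := by
                intro y v
                have h1 := hmul0 y v
                have e : (g u₁*(g y₀*(g y₀*g y₀)))*(g (y*v) - ν*(g y*g v)) = 0 := by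
                  linear_combination h1 - (g y*g v)*hν
                have h4 := (mul_eq_zero.mp e).resolve_left
                  (mul_ne_zero hgu (mul_ne_zero hy₀ (mul_ne_zero hy₀ hy₀)))
                linear_combination h4
              have hν0 : ν ≠ 0 := by
                intro h
                apply hu₁
                rw [hgm y₀ (u₁*y₀), h, zero_mul]
              have hANm : ∀ u, AN u = 3*ν*((g y₀*g y₀)*g u) := by
                intro u; rw [hAN u, hgm u y₀, hgm y₀ u, hgm y₀ y₀]; ring
              have hgtm : ∀ u, g (y₀*(u*y₀)) = ν*ν*((g y₀*g y₀)*g u) := by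
                intro u; rw [hgm y₀ (u*y₀), hgm u y₀]; ring
              have hk : ∀ x, 2*f x = 3*ν*f (x*z₀) - ν*ν*f (x*(z₀*z₀)) := by
                intro x
                have h1 := T2 f hEf x y₀
                rw [hANm y₀, hgtm y₀] at h1
                have e : (g y₀*(g y₀*g y₀))*((2*f x)
                    - (3*ν*f (x*z₀) - ν*ν*f (x*(z₀*z₀)))) = 0 := by
                  linear_combination h1
                have h4 := (mul_eq_zero.mp e).resolve_left
                  (mul_ne_zero hy₀ (mul_ne_zero hy₀ hy₀))
                linear_combination h4
              obtain ⟨f₂, hf₂def⟩ : ∃ f₂ : S → ℂ, ∀ x, f₂ x = ν*f (x*z₀) - f x :=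
                ⟨fun x => ν*f (x*z₀) - f x, fun _ => rfl⟩
              have hEf₂ : ∀ x y, f₂ (x*(y*z₀)) + f₂ (σ y*(x*z₀)) = 2*f₂ x*g y := by
                intro x y
                have h1 := hEf x y
                have h2 := hWZ f hEf x y
                rw [hf₂def, hf₂def, hf₂def]
                simp only [mul_assoc]
                linear_combination ν*h2 - h1
              have hf₂Wil : ∀ x u : S, f₂ (x*u) + f₂ (σ u*x) = 2*f₂ x*(ν*g u/2) := by
                intro x u
                have h1 := TREP f₂ hEf₂ x u
                rw [hANm u, hgtm u] at h1
                have h2 := hf₂def (x*z₀)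
                simp only [mul_assoc] at h2
                have h3 := hf₂def x
                have h4 := hk x
                have e : (g y₀*g y₀)*((f₂ (x*u) + f₂ (σ u*x)) - 2*f₂ x*(ν*g u/2)) = 0 := by
                  linear_combination h1 - (ν*ν*((g y₀*g y₀)*g u))*h2
                    + (2*ν*((g y₀*g y₀)*g u))*h3 - (ν*((g y₀*g y₀)*g u))*h4
                have h5 := (mul_eq_zero.mp e).resolve_left (mul_ne_zero hy₀ hy₀)
                linear_combination h5
              by_cases hf₂0 : ∀ x, f₂ x = 0
              · refine ⟨1/ν, one_div_ne_zero hν0, fun x => ?_⟩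
                have h1 := hf₂0 x
                rw [hf₂def x] at h1
                have e : ν*(f (x*z₀) - (1/ν)*f x) = 0 := by
                  field_simp
                  linear_combination h1
                have h4 := (mul_eq_zero.mp e).resolve_left hν0
                linear_combination h4
              · exfalso
                push_neg at hf₂0
                obtain ⟨x₂, hx₂⟩ := hf₂0
                have hf₂ne : f₂ ≠ 0 := fun h => hx₂ (by rw [h]; rfl)
                have hG₂ne : (fun u => ν*g u/2) ≠ 0 := by
                  intro h
                  have h1 : ν*g y₀/2 = 0 := congrFun h y₀
                  rcases mul_eq_zero.mp ((div_eq_zero_iff.mp h1).resolve_right two_ne_zero)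
                    with h' | h'
                  · exact hν0 h'
                  · exact hy₀ h'
                have hmm : ∀ x y : S, (ν*g (x*y)) = (ν*g x)*(ν*g y) := fun x y => by
                  rw [hgm x y]; ring
                rcases wilson_variant σ hσmul hσinv f₂ (fun u => ν*g u/2)
                    (fun x u => hf₂Wil x u) hf₂ne hG₂ne with hO1 | hO2 | hO3
                · obtain ⟨m', t, hm', ht, hwt, hGt⟩ := hO1
                  have hm'ne : ∃ x, m' x ≠ 0 :=
                    ⟨x₂, fun h => hx₂ (by rw [hwt x₂, h, mul_zero])⟩
                  refine mult_sum_contra σ hσmul hσinv (fun x => ν*g x) m' hmm hm' hm'ne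
                    (fun x => ?_)
                  have h1 : ν*g x/2 = (m' x + m' (σ x))/2 := hGt x
                  linear_combination 2*h1
                · obtain ⟨χ, α, β, hχ, hneq, hwf, hGf⟩ := hO2
                  have hχne : ∃ x, χ x ≠ 0 := by
                    by_contra h; push_neg at h
                    apply hneq; funext x; rw [h x, h (σ x)]
                  refine mult_sum_contra σ hσmul hσinv (fun x => ν*g x) χ hmm hχ hχne
                    (fun x => ?_)
                  have h1 : ν*g x/2 = (χ x + χ (σ x))/2 := hGf x
                  linear_combination 2*h1
                · obtain ⟨χ, φp, γ, hχ, hχ0, hφp0, hsineφ, hχσ, hφσ, hwf, hGf⟩ := hO3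
                  have h1 := hχ y₀ y₀
                  have e1 : ν*g y₀/2 = χ y₀ := hGf y₀
                  have e2 : ν*g (y₀*y₀)/2 = χ (y₀*y₀) := hGf (y₀*y₀)
                  rw [hgm y₀ y₀] at e2
                  have e : (ν*g y₀)*(ν*g y₀) = 0 := by
                    linear_combination 4*e2 + 4*h1 - (2*ν*g y₀ + 4*χ y₀)*e1
                  exact (mul_ne_zero (mul_ne_zero hν0 hy₀) (mul_ne_zero hν0 hy₀)) e
    -- endgame : Wilson pair (f, g/c)
    have hWil : ∀ x y : S, f (x*y) + f (σ y*x) = 2*f x*(g y/c) := by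
      intro x y
      have h1 := hEf x y
      have e1 : f (x*(y*z₀)) = c*f (x*y) := by
        have := hc (x*y); simpa [mul_assoc] using this
      have e2 : f (σ y*(x*z₀)) = c*f (σ y*x) := by
        have := hc (σ y*x); simpa [mul_assoc] using this
      rw [e1, e2] at h1
      have e : c*((f (x*y) + f (σ y*x)) - 2*f x*(g y/c)) = 0 := by
        field_simp
        linear_combination h1
      have h4 := (mul_eq_zero.mp e).resolve_left hc0
      linear_combination h4
    have hGne2 : (fun y => g y/c) ≠ 0 := by
      intro h
      have h1 : g y₀/c = 0 := congrFun h y₀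
      exact hy₀ ((div_eq_zero_iff.mp h1).resolve_right hc0)
    rcases wilson_variant σ hσmul hσinv f (fun y => g y/c)
        (fun x y => hWil x y) hf0 hGne2 with hO1 | hO2 | hO3
    · obtain ⟨m, t, hm, ht, hwt, hGt⟩ := hO1
      obtain ⟨xm, hxm⟩ : ∃ x, m x ≠ 0 :=
        ⟨xf, fun h => hxf (by rw [hwt xf, h, mul_zero])⟩
      have hmz : m z₀ = c := by
        have h1 := hc xm
        rw [hwt (xm*z₀), hwt xm, hm xm z₀] at h1
        have e : (t*m xm)*(m z₀ - c) = 0 := by linear_combination h1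
        have h4 := (mul_eq_zero.mp e).resolve_left (mul_ne_zero ht hxm)
        linear_combination h4
      refine Or.inr (Or.inl ⟨m, t, hm, ht, by rw [hmz]; exact hc0, hwt, fun x => ?_⟩)
      have h1 : g x/c = (m x + m (σ x))/2 := hGt x
      rw [div_eq_iff hc0] at h1
      rw [hmz]
      linear_combination h1
    · obtain ⟨χ, α, β, hχ, hneq, hwf, hGf⟩ := hO2
      have hχ'm : ∀ x y : S, χ (σ (x*y)) = χ (σ x)*χ (σ y) := by
        intro x y; rw [hσmul, hχ]
      have hneq' : ∃ y, χ y ≠ χ (σ y) := by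
        by_contra h; push_neg at h; exact hneq (funext h)
      have hχne : ∃ x, χ x ≠ 0 := by
        by_contra h; push_neg at h
        apply hneq; funext x; rw [h x, h (σ x)]
      have hχσne : ∃ x, χ (σ x) ≠ 0 := by
        obtain ⟨x1, h1⟩ := hχne; exact ⟨σ x1, by rwa [hσinv]⟩
      have hkey : ∀ x, (α*(χ z₀ - c))*χ x + (β*(χ (σ z₀) - c))*χ (σ x) = 0 := by
        intro x
        have h1 := hc x
        rw [hwf (x*z₀), hwf x, hχ x z₀, hσmul, hχ (σ x) (σ z₀)] at h1
        linear_combination h1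
      have hαβ := mult_indep χ (fun x => χ (σ x)) hχ (fun x y => hχ'm x y) hneq'
        hχne hχσne _ _ hkey
      have hgform : ∀ x, g x = (c/2)*(χ x + χ (σ x)) := by
        intro x
        have h1 : g x/c = (χ x + χ (σ x))/2 := hGf x
        rw [div_eq_iff hc0] at h1
        linear_combination h1
      by_cases hα : α = 0
      · have hβ : β ≠ 0 := by
          intro hβ0; apply hxf; rw [hwf xf, hα, hβ0]; ring
        have hcz : χ (σ z₀) = c := by
          have h4 := (mul_eq_zero.mp hαβ.2).resolve_left hβ
          linear_combination h4
        refine Or.inr (Or.inl ⟨fun x => χ (σ x), β, fun x y => hχ'm x y, hβ, ?_, ?_, ?_⟩)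
        · show χ (σ z₀) ≠ 0
          rw [hcz]; exact hc0
        · intro x; rw [hwf x, hα]; ring
        · intro x
          show g x = (χ (σ z₀)/2)*(χ (σ x) + χ (σ (σ x)))
          rw [hσinv, hcz, hgform x]; ring
      · by_cases hβ : β = 0
        · have hcz : χ z₀ = c := by
            have h4 := (mul_eq_zero.mp hαβ.1).resolve_left hα
            linear_combination h4
          refine Or.inr (Or.inl ⟨χ, α, hχ, hα, by rw [hcz]; exact hc0,
            fun x => by rw [hwf x, hβ]; ring, fun x => ?_⟩)
          rw [hcz, hgform x]
        · have hcz1 : χ z₀ = c := by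
            have h4 := (mul_eq_zero.mp hαβ.1).resolve_left hα
            linear_combination h4
          have hcz2 : χ (σ z₀) = c := by
            have h4 := (mul_eq_zero.mp hαβ.2).resolve_left hβ
            linear_combination h4
          refine Or.inr (Or.inr (Or.inl ⟨χ, α, β, hχ, ?_, hneq,
            by rw [hcz1, hcz2], by rw [hcz1]; exact hc0, hwf, fun x => ?_⟩))
          · intro hp
            exact hα (by simpa using congrArg Prod.fst hp)
          · rw [hcz1, hgform x]
    · obtain ⟨χ, φp, γ, hχ, hχ0, hφp0, hsineφ, hχσ, hφσ, hwf, hGf⟩ := hO3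
      obtain ⟨x1, hx1⟩ : ∃ x, χ x ≠ 0 := by
        by_contra h; push_neg at h; exact hχ0 (funext fun x => h x)
      have hkey : ∀ x, (γ*χ z₀ + φp z₀ - c*γ)*χ x + (χ z₀ - c)*φp x = 0 := by
        intro x
        have h1 := hc x
        rw [hwf (x*z₀), hwf x, hχ x z₀, hsineφ x z₀] at h1
        linear_combination h1
      have hχz : χ z₀ = c := by
        by_contra hne
        have hne' : χ z₀ - c ≠ 0 := sub_ne_zero.mpr hne
        have hτ : ∀ x, φp x = ((c*γ - γ*χ z₀ - φp z₀)/(χ z₀ - c))*χ x := by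
          intro x
          have h1 := hkey x
          have e : (χ z₀ - c)*(φp x - ((c*γ - γ*χ z₀ - φp z₀)/(χ z₀ - c))*χ x) = 0 := by
            field_simp
            linear_combination h1
          have h4 := (mul_eq_zero.mp e).resolve_left hne'
          linear_combination h4
        have h1 := hsineφ x1 x1
        rw [hτ (x1*x1), hτ x1, hχ x1 x1] at h1
        have e : ((c*γ - γ*χ z₀ - φp z₀)/(χ z₀ - c))*(χ x1*χ x1) = 0 := by
          linear_combination -h1
        have h2 := (mul_eq_zero.mp e).resolve_right (mul_ne_zero hx1 hx1)
        apply hφp0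
        funext x
        rw [hτ x, h2, zero_mul]
        rfl
      have hφz : φp z₀ = 0 := by
        have h1 := hkey x1
        rw [hχz] at h1
        have e : φp z₀*χ x1 = 0 := by linear_combination h1
        exact (mul_eq_zero.mp e).resolve_right hx1
      refine Or.inr (Or.inr (Or.inr ⟨χ, φp, 1, γ, hχ, hχ0, hφp0, hsineφ, one_ne_zero,
        hχσ, hφσ, by rw [hχz]; exact hc0, hφz, fun x => by rw [hwf x]; ring, fun x => ?_⟩))
      have h1 : g x/c = χ x := hGf x
      rw [div_eq_iff hc0] at h1
      rw [hχz]
      linear_combination h1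
  · rintro (hf | ⟨m, lam, hm, hlam, hmz, hf, hgf⟩ | ⟨χ, α, β, hχ, hab, hne, hzz, hz0, hf, hgf⟩ |
      ⟨χ, φp, lam, γ, hχ, hχ0, hφ0, hsine, hlam, hχσ, hφσ, hχz, hφz, hf, hgf⟩) <;> intro x y
    · rw [hf]; simp
    · rw [hf (x*y*z₀), hf (σ y*x*z₀), hf x, hgf y,
        hm (x*y) z₀, hm x y, hm (σ y*x) z₀, hm (σ y) x]
      ring
    · rw [hf (x*y*z₀), hf (σ y*x*z₀), hf x, hgf y]
      simp only [hσmul, hσinv, hχ]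
      rw [← hzz]
      ring
    · rw [hf (x*y*z₀), hf (σ y*x*z₀), hf x, hgf y]
      simp only [hσmul, hσinv, hχ, hsine, hχσ, hφσ, hφz]
      ring
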